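/- Assume f has an L_g-quadratic upper bound with L_g > 0, and let η̄ ∈ (0,1), β > 1, ε ∈ (0,1). Let x ∈ ℝⁿ and suppose there is an index i with |x_i| ≤ √ε and g^ε(x)_i ≠ 0 (equivalently, |(∇f(x))_i| > λ + ε^{3/4}). Then ‖G_t(x)‖² ≥ ε^{3/2} for every t > 0; moreover there exists a smallest nonnegative integer j* with φ(P_{β^{j*}}(x)) < φ(x) − (η̄/β^{j*})·‖G_{β^{j*}}(x)‖², and φ(x) − φ(P_{β^{j*}}(x)) ≥ (η̄ / max{βL_g/(2 − 2η̄), 1})·ε^{3/2}. -/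

import Mathlib

open scoped RealInnerProductSpace

noncomputable section

/-- `ℝⁿ` with the Euclidean norm. -/
abbrev E (n : ℕ) := EuclideanSpace ℝ (Fin n)

/-- The vector `g(x)` measuring first-order stationarity of `f + lam‖·‖₁`. -/
def gvec (n : ℕ) (f : E n → ℝ) (lam : ℝ) (x : E n) : E n := WithLp.toLp 2 fun i =>
  if 0 < x i then gradient f x i + lam
  else if x i < 0 then gradient f x i - lam
  else gradient f x i - min (max (-lam) (gradient f x i)) lam

/-- The proximal-gradient residual `G_t(x) = t (x - prox_{(lam/t)‖·‖₁}(x - ∇f(x)/t))`. -/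
def Gres (n : ℕ) (f : E n → ℝ) (lam t : ℝ) (x : E n) : E n := WithLp.toLp 2 fun i =>
  if (gradient f x i + lam) / t < x i then gradient f x i + lam
  else if x i < (gradient f x i - lam) / t then gradient f x i - lam
  else t * x i

/-- The proximal-gradient update `P_t(x) = prox_{(lam/t)‖·‖₁}(x - ∇f(x)/t)` (soft-thresholding). -/
def Pt (n : ℕ) (f : E n → ℝ) (lam t : ℝ) (x : E n) : E n := WithLp.toLp 2 fun i =>
  if lam / t < x i - gradient f x i / t then x i - gradient f x i / t - lam / t
  else if x i - gradient f x i / t < -(lam / t) then x i - gradient f x i / t + lam / t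
  else 0

/-- The objective `φ(x) = f(x) + lam ‖x‖₁`. -/
def phi (n : ℕ) (f : E n → ℝ) (lam : ℝ) (x : E n) : ℝ := f x + lam * ∑ i, |x i|

/-- The Hessian of `f` at `x`, as a continuous linear map. -/
def hess (n : ℕ) (f : E n → ℝ) (x : E n) : E n →L[ℝ] E n := fderiv ℝ (gradient f) x

/-- The scaling map `S_{x,ε}`: identity on coordinates with `|x_i| > √ε`, multiplication by
`x_i` on the others. -/
def Smap (n : ℕ) (x : E n) (eps : ℝ) (u : E n) : E n := WithLp.toLp 2 fun i =>
  if Real.sqrt eps < |x i| then u i else x i * u i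

/-- The relaxed first-order residual vector `g^ε(x)`. -/
def gveps (n : ℕ) (f : E n → ℝ) (lam eps : ℝ) (x : E n) : E n := WithLp.toLp 2 fun i =>
  if Real.sqrt eps < x i then gradient f x i + lam
  else if x i < -Real.sqrt eps then gradient f x i - lam
  else gradient f x i -
    min (max (-(lam + eps ^ ((3:ℝ)/4))) (gradient f x i)) (lam + eps ^ ((3:ℝ)/4))


section Aux

variable {n : ℕ} (f : E n → ℝ) (lam t : ℝ) (x : E n)

private lemma cond1 (ht : 0 < t) (i : Fin n) :
    (lam / t < x i - gradient f x i / t) ↔ (gradient f x i + lam < t * x i) := by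
  rw [div_lt_iff₀ ht, sub_mul, div_mul_cancel₀ _ ht.ne']
  constructor <;> intro h <;> nlinarith

private lemma cond1' (ht : 0 < t) (i : Fin n) :
    ((gradient f x i + lam) / t < x i) ↔ (gradient f x i + lam < t * x i) := by
  rw [div_lt_iff₀ ht]
  constructor <;> intro h <;> nlinarith

private lemma cond2 (ht : 0 < t) (i : Fin n) :
    (x i - gradient f x i / t < -(lam / t)) ↔ (t * x i < gradient f x i - lam) := by
  rw [sub_lt_iff_lt_add, show -(lam/t) + gradient f x i / t = (gradient f x i - lam)/t by ring,
    lt_div_iff₀ ht]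
  constructor <;> intro h <;> nlinarith

private lemma cond2' (ht : 0 < t) (i : Fin n) :
    (x i < (gradient f x i - lam) / t) ↔ (t * x i < gradient f x i - lam) := by
  rw [lt_div_iff₀ ht]
  constructor <;> intro h <;> nlinarith

private lemma Gres_eq (ht : 0 < t) (i : Fin n) :
    Gres n f lam t x i = t * (x i - Pt n f lam t x i) := by
  unfold Gres Pt
  simp only [cond1 f lam t x ht i, cond1' f lam t x ht i, cond2 f lam t x ht i,
    cond2' f lam t x ht i]
  split_ifs with h1 h2
  · field_simp; ring
  · field_simp; ring
  · ring

private lemma l1_ineq (hlam : 0 < lam) (ht : 0 < t) (i : Fin n) :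
    lam * |Pt n f lam t x i| - lam * |x i| ≤
      (gradient f x i - Gres n f lam t x i) * (x i - Pt n f lam t x i) := by
  unfold Gres Pt
  simp only [cond1 f lam t x ht i, cond1' f lam t x ht i, cond2 f lam t x ht i,
    cond2' f lam t x ht i]
  split_ifs with h1 h2
  · have hp : 0 < x i - gradient f x i / t - lam / t := by
      have : lam / t < x i - gradient f x i / t := (cond1 f lam t x ht i).mpr h1
      linarith
    rw [abs_of_pos hp]
    nlinarith [le_abs_self (x i)]
  · have hp : x i - gradient f x i / t + lam / t < 0 := by
      have : x i - gradient f x i / t < -(lam / t) := (cond2 f lam t x ht i).mpr h2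
      linarith
    rw [abs_of_neg hp]
    nlinarith [neg_abs_le (x i)]
  · push_neg at h1 h2
    rw [abs_zero]
    rcases le_or_gt 0 (x i) with hx | hx
    · rw [abs_of_nonneg hx]; nlinarith
    · rw [abs_of_neg hx]; nlinarith

private lemma norm_sq_eq (v : E n) : ‖v‖^2 = ∑ i, (v i)^2 := by
  rw [EuclideanSpace.norm_sq_eq]
  simp [sq_abs]

private lemma phi_decrease (Lg : ℝ)
    (hquad : ∀ x y : E n, ∀ L : ℝ, Lg ≤ L →
      f y ≤ f x + ⟪gradient f x, y - x⟫ + L / 2 * ‖y - x‖ ^ 2)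
    (hlam : 0 < lam) (ht : 0 < t) :
    phi n f lam (Pt n f lam t x) ≤
      phi n f lam x + (Lg / (2 * t ^ 2) - 1 / t) * ‖Gres n f lam t x‖ ^ 2 := by
  set p := Pt n f lam t x with hp
  set G := Gres n f lam t x with hG
  have hGp : ∀ i, x i - p i = G i / t := by
    intro i
    rw [hG, Gres_eq f lam t x ht i]
    field_simp
    rfl
  have hfq : f p ≤ f x + ⟪gradient f x, p - x⟫ + Lg / 2 * ‖p - x‖ ^ 2 :=
    hquad x p Lg le_rfl
  have hinner : ⟪gradient f x, p - x⟫ = ∑ i, gradient f x i * (p i - x i) := by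
    rw [PiLp.inner_apply]
    simp only [RCLike.inner_apply, conj_trivial, PiLp.sub_apply, mul_comm]
  have hnorm : ‖p - x‖ ^ 2 = ∑ i, (x i - p i) ^ 2 := by
    rw [norm_sq_eq]
    apply Finset.sum_congr rfl
    intro i _
    simp only [PiLp.sub_apply]
    ring
  have hnG : ‖G‖ ^ 2 = ∑ i, (G i) ^ 2 := norm_sq_eq G
  have hsum : ∑ i, (lam * |p i| - lam * |x i|) ≤
      ∑ i, (gradient f x i - G i) * (x i - p i) :=
    Finset.sum_le_sum fun i _ => l1_ineq f lam t x hlam ht i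
  have key : (∑ i, gradient f x i * (p i - x i)) + Lg / 2 * (∑ i, (x i - p i) ^ 2)
      + ∑ i, (gradient f x i - G i) * (x i - p i)
      = (Lg / (2 * t ^ 2) - 1 / t) * ∑ i, (G i) ^ 2 := by
    rw [Finset.mul_sum, Finset.mul_sum, ← Finset.sum_add_distrib, ← Finset.sum_add_distrib]
    apply Finset.sum_congr rfl
    intro i _
    rw [show p i - x i = -(x i - p i) by ring, hGp i]
    field_simp
    ring
  have hl1 : ∑ i, (lam * |p i| - lam * |x i|) = lam * ∑ i, |p i| - lam * ∑ i, |x i| := by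
    rw [Finset.sum_sub_distrib, Finset.mul_sum, Finset.mul_sum]
  rw [hinner, hnorm] at hfq
  rw [hl1] at hsum
  unfold phi
  rw [hnG]
  linarith

private lemma Gres_lower (hlam : 0 < lam) {ε : ℝ} (hε : ε ∈ Set.Ioo (0:ℝ) 1)
    (i : Fin n) (hgrad : lam + ε ^ ((3:ℝ)/4) < |gradient f x i|)
    (ht : 0 < t) : ε ^ ((3:ℝ)/2) ≤ ‖Gres n f lam t x‖ ^ 2 := by
  have h34 : (0:ℝ) ≤ ε ^ ((3:ℝ)/4) := Real.rpow_nonneg hε.1.le _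
  have habs : ε ^ ((3:ℝ)/4) ≤ |Gres n f lam t x i| := by
    unfold Gres
    simp only [cond1' f lam t x ht i, cond2' f lam t x ht i]
    rcases lt_abs.mp hgrad with hgt | hgt
    · split_ifs with h1 h2
      · linarith [le_abs_self (gradient f x i + lam)]
      · linarith [le_abs_self (gradient f x i - lam)]
      · push_neg at h1 h2
        linarith [le_abs_self (t * x i)]
    · split_ifs with h1 h2
      · linarith [neg_abs_le (gradient f x i + lam)]
      · linarith [neg_abs_le (gradient f x i - lam)]
      · push_neg at h1 h2
        linarith [neg_abs_le (t * x i)]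
  have hsq : (ε ^ ((3:ℝ)/4)) ^ 2 = ε ^ ((3:ℝ)/2) := by
    rw [← Real.rpow_natCast (ε ^ ((3:ℝ)/4)) 2, ← Real.rpow_mul hε.1.le]
    norm_num
  calc ε ^ ((3:ℝ)/2) = (ε ^ ((3:ℝ)/4)) ^ 2 := hsq.symm
    _ ≤ (Gres n f lam t x i) ^ 2 := by
        rw [← sq_abs (Gres n f lam t x i)]
        exact pow_le_pow_left₀ h34 habs 2
    _ ≤ ∑ j, (Gres n f lam t x j) ^ 2 :=
        Finset.single_le_sum (f := fun j => (Gres n f lam t x j) ^ 2)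
          (fun j _ => sq_nonneg _) (Finset.mem_univ i)
    _ = ‖Gres n f lam t x‖ ^ 2 := (norm_sq_eq _).symm

private lemma gveps_grad (hlam : 0 < lam) {ε : ℝ}
    (i : Fin n) (hxi : |x i| ≤ Real.sqrt ε) (hg : gveps n f lam ε x i ≠ 0) :
    lam + ε ^ ((3:ℝ)/4) < |gradient f x i| := by
  by_contra h
  push_neg at h
  apply hg
  unfold gveps
  simp only [PiLp.toLp_apply]
  rw [if_neg (not_lt.mpr (abs_le.mp hxi).2), if_neg (not_lt.mpr (abs_le.mp hxi).1)]
  rw [max_eq_right (neg_le_of_abs_le h), min_eq_left (le_of_abs_le h), sub_self]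

end Aux

/-- If some nearly-zero coordinate has a nonzero relaxed residual
`g^ε(x)_i ≠ 0`, then `‖G_t(x)‖² ≥ ε^{3/2}` for all `t > 0`, the proximal-gradient line search
terminates at a smallest `j*`, and the resulting decrease is at least
`(η̄ / max{βL_g/(2-2η̄), 1}) ε^{3/2}`. -/
theorem stmt10 {n : ℕ} (f : E n → ℝ) (hf : Differentiable ℝ f) (lam : ℝ) (hlam : 0 < lam)
    (Lg : ℝ) (hLg : 0 < Lg)
    (hquad : ∀ x y : E n, ∀ L : ℝ, Lg ≤ L →
      f y ≤ f x + ⟪gradient f x, y - x⟫ + L / 2 * ‖y - x‖ ^ 2)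
    (ηb β ε : ℝ) (hη : ηb ∈ Set.Ioo (0:ℝ) 1) (hβ : 1 < β) (hε : ε ∈ Set.Ioo (0:ℝ) 1)
    (x : E n) (hi : ∃ i, |x i| ≤ Real.sqrt ε ∧ gveps n f lam ε x i ≠ 0) :
    (∀ t : ℝ, 0 < t → ε ^ ((3:ℝ)/2) ≤ ‖Gres n f lam t x‖ ^ 2) ∧
    ∃ j : ℕ,
      (phi n f lam (Pt n f lam (β ^ j) x) <
          phi n f lam x - ηb / β ^ j * ‖Gres n f lam (β ^ j) x‖ ^ 2) ∧
      (∀ j' < j, ¬(phi n f lam (Pt n f lam (β ^ j') x) <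
          phi n f lam x - ηb / β ^ j' * ‖Gres n f lam (β ^ j') x‖ ^ 2)) ∧
      ηb / max (β * Lg / (2 - 2 * ηb)) 1 * ε ^ ((3:ℝ)/2) ≤
        phi n f lam x - phi n f lam (Pt n f lam (β ^ j) x) := by
  classical
  obtain ⟨i, hxi, hgi⟩ := hi
  have hgrad : lam + ε ^ ((3:ℝ)/4) < |gradient f x i| :=
    gveps_grad f lam x hlam i hxi hgi
  have hkey : ∀ t : ℝ, 0 < t → ε ^ ((3:ℝ)/2) ≤ ‖Gres n f lam t x‖ ^ 2 :=
    fun t ht => Gres_lower f lam t x hlam hε i hgrad ht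
  have hεpos : (0:ℝ) < ε ^ ((3:ℝ)/2) := Real.rpow_pos_of_pos hε.1 _
  have h2η : 0 < 2 - 2 * ηb := by linarith [hη.2]
  have hβ0 : (0:ℝ) < β := lt_trans one_pos hβ
  have hGpos : ∀ t : ℝ, 0 < t → 0 < ‖Gres n f lam t x‖ ^ 2 :=
    fun t ht => lt_of_lt_of_le hεpos (hkey t ht)
  have hArm : ∀ t : ℝ, 0 < t → Lg / (2 - 2 * ηb) < t →
      phi n f lam (Pt n f lam t x) < phi n f lam x - ηb / t * ‖Gres n f lam t x‖ ^ 2 := by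
    intro t ht hlt
    have h1 := phi_decrease f lam t x Lg hquad hlam ht
    have hL : Lg < t * (2 - 2 * ηb) := (div_lt_iff₀ h2η).mp hlt
    have hc : Lg / (2 * t ^ 2) - 1 / t < -(ηb / t) := by
      rw [show Lg / (2 * t ^ 2) - 1 / t = (Lg - 2 * t) / (2 * t ^ 2) by field_simp,
        show -(ηb / t) = (-ηb * (2 * t)) / (2 * t ^ 2) by field_simp]
      exact (div_lt_div_iff_of_pos_right (by positivity)).mpr (by nlinarith)
    nlinarith [hGpos t ht, mul_lt_mul_of_pos_right hc (hGpos t ht)]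
  have hβj : ∀ j : ℕ, (0:ℝ) < β ^ j := fun j => pow_pos hβ0 j
  obtain ⟨j0, hj0⟩ := pow_unbounded_of_one_lt (Lg / (2 - 2 * ηb)) hβ
  set Pred : ℕ → Prop := fun j =>
    phi n f lam (Pt n f lam (β ^ j) x) <
      phi n f lam x - ηb / β ^ j * ‖Gres n f lam (β ^ j) x‖ ^ 2 with hPred
  have hex : ∃ j, Pred j := ⟨j0, hArm _ (hβj j0) hj0⟩
  refine ⟨hkey, Nat.find hex, Nat.find_spec hex, fun j' hj' => Nat.find_min hex hj', ?_⟩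
  set j := Nat.find hex with hj
  have hjle : (β : ℝ) ^ j ≤ max (β * Lg / (2 - 2 * ηb)) 1 := by
    rcases Nat.eq_zero_or_pos j with h0 | h0
    · rw [h0, pow_zero]; exact le_max_right _ _
    · have hprev : ¬ Pred (j - 1) := Nat.find_min hex (Nat.sub_lt h0 one_pos)
      have hsmall : β ^ (j - 1) ≤ Lg / (2 - 2 * ηb) := by
        by_contra hcon
        push_neg at hcon
        exact hprev (hArm _ (hβj _) hcon)
      have hjj : β ^ j = β * β ^ (j - 1) := by
        conv_lhs => rw [show j = (j-1) + 1 from (Nat.succ_pred_eq_of_pos h0).symm]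
        rw [pow_succ]; ring
      rw [hjj]
      calc β * β ^ (j - 1) ≤ β * (Lg / (2 - 2 * ηb)) :=
            mul_le_mul_of_nonneg_left hsmall hβ0.le
        _ = β * Lg / (2 - 2 * ηb) := by ring
        _ ≤ max (β * Lg / (2 - 2 * ηb)) 1 := le_max_left _ _
  have hspec : Pred j := Nat.find_spec hex
  have hdiv : ηb / max (β * Lg / (2 - 2 * ηb)) 1 ≤ ηb / β ^ j :=
    div_le_div_of_nonneg_left hη.1.le (hβj j) hjle
  calc ηb / max (β * Lg / (2 - 2 * ηb)) 1 * ε ^ ((3:ℝ)/2)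
      ≤ ηb / β ^ j * ε ^ ((3:ℝ)/2) := mul_le_mul_of_nonneg_right hdiv hεpos.le
    _ ≤ ηb / β ^ j * ‖Gres n f lam (β ^ j) x‖ ^ 2 :=
        mul_le_mul_of_nonneg_left (hkey _ (hβj j)) (div_nonneg hη.1.le (hβj j).le)
    _ ≤ phi n f lam x - phi n f lam (Pt n f lam (β ^ j) x) := by
        have hs2 := hspec
        rw [hPred] at hs2
        linarith
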